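/- For every integer n ≥ 1 and every composition (n₁,…,n_k) of n (a finite sequence of positive integers with n₁+⋯+n_k = n), the composition C_n of table sizes in the ordered Chinese Restaurant Process satisfies the product formula P(C_n = (n₁,…,n_k)) = ∏_{j=1}^{k} q_{α,θ}(N_j, n_j), where N_j = n_j + n_{j+1} + ⋯ + n_k. In particular, the sequence (C_n, n ≥ 1) is regenerative: conditionally given that the first part of C_n equals n₁, the remaining parts form a composition of n−n₁ distributed as C_{n−n₁}. -/

import Mathlib

set_option maxHeartbeats 1000000


/-- Rising factorial `[x]_j = x (x+1) ⋯ (x+j-1)`, with `[x]_0 = 1`. -/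
noncomputable def risingFactorial (x : ℝ) : ℕ → ℝ
  | 0 => 1
  | n + 1 => risingFactorial x n * (x + n)

/-- The decrement matrix
`q_{α,θ}(n, m) = C(n,m) · ((n−m)α + mθ)/n · [1−α]_{m−1} / [n−m+θ]_m` for `1 ≤ m ≤ n`,
and `q_{α,θ}(n, m) = 0` otherwise. -/
noncomputable def decrementMatrix (α θ : ℝ) (n m : ℕ) : ℝ :=
  if 1 ≤ m ∧ m ≤ n then
    (n.choose m : ℝ) * ((((n : ℝ) - m) * α + m * θ) / n) *
      risingFactorial (1 - α) (m - 1) / risingFactorial ((n : ℝ) - m + θ) m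
  else 0

lemma risingFactorial_pos {x : ℝ} (hx : 0 < x) (n : ℕ) : 0 < risingFactorial x n := by
  induction n with
  | zero => norm_num [risingFactorial]
  | succ k ih => exact mul_pos ih (by positivity)

lemma risingFactorial_succ_left (x : ℝ) (n : ℕ) :
    risingFactorial x (n + 1) = x * risingFactorial (x + 1) n := by
  induction n with
  | zero => simp [risingFactorial]
  | succ k ih =>
    rw [show k + 1 + 1 = (k+1) + 1 from rfl, risingFactorial, ih, risingFactorial]
    push_cast; ring

lemma dM_eq_zero_of_lt (α θ : ℝ) {n m : ℕ} (h : n < m) : decrementMatrix α θ n m = 0 :=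
  if_neg (by omega)

lemma dM_one_one (α θ : ℝ) (hθ : 0 < θ) : decrementMatrix α θ 1 1 = 1 := by
  rw [decrementMatrix, if_pos (by omega)]
  simp [risingFactorial]
  exact hθ.ne'

lemma dM_of_le (α θ : ℝ) {n m : ℕ} (h1 : 1 ≤ m) (h2 : m ≤ n) :
    decrementMatrix α θ n m = (n.choose m : ℝ) * ((((n : ℝ) - m) * α + m * θ) / n) *
      risingFactorial (1 - α) (m - 1) / risingFactorial ((n : ℝ) - m + θ) m :=
  if_pos ⟨h1, h2⟩

lemma claimA (α θ : ℝ) (hα0 : 0 < α) (hα1 : α < 1) (hθ : 0 < θ) {m N : ℕ}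
    (hm : 2 ≤ m) (hmN : m ≤ N) :
    decrementMatrix α θ (N-1) (m-1) * ((m:ℝ) - 1 - α)
      = ((N:ℝ) - 1 + θ) * decrementMatrix α θ N m
        - ((N:ℝ) - m - 1 + θ) * decrementMatrix α θ (N-1) m := by
  obtain ⟨k, rfl⟩ : ∃ k, m = k + 2 := ⟨m - 2, by omega⟩
  obtain ⟨d, rfl⟩ : ∃ d, N = (k + 2) + d := ⟨N - (k+2), by omega⟩
  rcases Nat.eq_zero_or_pos d with rfl | hd
  · -- m = N case
    rw [show k + 2 + 0 = k + 2 from by omega, show (k+2) - 1 = k+1 from rfl,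
      dM_eq_zero_of_lt α θ (n := k+1) (m := k+2) (by omega),
      dM_of_le α θ (n := k+1) (m := k+1) (by omega) (by omega),
      dM_of_le α θ (n := k+2) (m := k+2) (by omega) (by omega),
      show (k+2) - 1 = k+1 from rfl, show (k+1) - 1 = k from rfl]
    have cast1 : ((k + 2 : ℕ) : ℝ) - ((k + 2 : ℕ) : ℝ) + θ = θ := by push_cast; ring
    have cast2 : ((k + 1 : ℕ) : ℝ) - ((k + 1 : ℕ) : ℝ) + θ = θ := by push_cast; ring
    rw [cast1, cast2]
    rw [show risingFactorial θ (k+2) = risingFactorial θ (k+1) * (θ+(k+1)) from by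
      rw [risingFactorial]; push_cast; ring]
    rw [show risingFactorial (1-α) (k+1) = risingFactorial (1-α) k * ((k:ℝ) + 1 - α) from by
      rw [risingFactorial]; push_cast; ring]
    have hSpos : 0 < risingFactorial θ (k+1) := risingFactorial_pos hθ _
    have h1 : (θ + ((k:ℝ)+1)) ≠ 0 := by positivity
    have h2 : ((k:ℝ)+2) ≠ 0 := by positivity
    have h3 : ((k:ℝ)+1) ≠ 0 := by positivity
    rw [Nat.choose_self, Nat.choose_self]
    push_cast
    field_simp
    ring
  · obtain ⟨e, rfl⟩ : ∃ e, d = e + 1 := ⟨d - 1, by omega⟩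
    have h1 : (k + 2 + (e + 1)) - 1 = k + 2 + e := by omega
    rw [h1, show (k+2) - 1 = k + 1 from rfl,
      dM_of_le α θ (n := k+2+e) (m := k+1) (by omega) (by omega),
      dM_of_le α θ (n := k+2+(e+1)) (m := k+2) (by omega) (by omega),
      dM_of_le α θ (n := k+2+e) (m := k+2) (by omega) (by omega)]
    have cast1 : ((k + 2 + (e + 1) : ℕ) : ℝ) - ((k + 2 : ℕ) : ℝ) + θ = ((e:ℝ) + 1) + θ := by push_cast; ring
    have cast2 : ((k + 2 + e : ℕ) : ℝ) - ((k + 2 : ℕ) : ℝ) + θ = (e:ℝ) + θ := by push_cast; ring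
    have cast3 : ((k + 2 + e : ℕ) : ℝ) - ((k + 1 : ℕ) : ℝ) + θ = ((e:ℝ) + 1) + θ := by push_cast; ring
    rw [cast1, cast2, cast3]
    rw [show (k + 2) - 1 = k + 1 from rfl, show (k+1) - 1 = k from rfl]
    rw [show risingFactorial ((e:ℝ)+1+θ) (k+2) = risingFactorial ((e:ℝ)+1+θ) (k+1) * ((e:ℝ)+1+θ+(k+1)) from by
      rw [risingFactorial]; push_cast; ring]
    rw [show risingFactorial ((e:ℝ)+θ) (k+2) = ((e:ℝ)+θ) * risingFactorial ((e:ℝ)+1+θ) (k+1) from by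
      rw [risingFactorial_succ_left]; ring_nf]
    rw [show risingFactorial (1-α) (k+1) = risingFactorial (1-α) k * ((k:ℝ) + 1 - α) from by
      rw [risingFactorial]; push_cast; ring]
    have hpas : ((k+2+(e+1)).choose (k+2) : ℝ)
        = ((k+2+e).choose (k+1) : ℝ) + ((k+2+e).choose (k+2) : ℝ) := by
      rw [show k+2+(e+1) = (k+2+e)+1 from by omega, show k+2 = (k+1)+1 from rfl,
        Nat.choose_succ_succ]
      push_cast; ring
    have hrel : ((k+2+e).choose (k+2) : ℝ) * ((k:ℝ)+2) = ((k+2+e).choose (k+1) : ℝ) * ((e:ℝ)+1) := by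
      have := Nat.choose_succ_right_eq (k+2+e) (k+1)
      rw [show k+2+e - (k+1) = e + 1 from by omega] at this
      exact_mod_cast congrArg (Nat.cast : ℕ → ℝ) this
    set S := risingFactorial ((e:ℝ)+1+θ) (k+1) with hS
    set R := risingFactorial (1-α) k with hR
    set a : ℝ := ((k+2+e).choose (k+1) : ℝ) with ha
    set b : ℝ := ((k+2+e).choose (k+2) : ℝ) with hb
    set cc : ℝ := ((k+2+(e+1)).choose (k+2) : ℝ) with hcc
    have hSpos : 0 < S := risingFactorial_pos (by positivity) _
    have hRpos : 0 < R := risingFactorial_pos (by linarith) _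
    have hN : ((k:ℝ) + 2 + (e + 1)) ≠ 0 := by positivity
    have hN1 : ((k:ℝ) + 2 + e) ≠ 0 := by positivity
    have hden1 : ((e:ℝ) + 1 + θ + ((k:ℝ) + 1)) ≠ 0 := by positivity
    have hden2 : ((e:ℝ) + θ) ≠ 0 := by positivity
    push_cast
    rw [hpas]
    field_simp
    linear_combination (θ - α) * (((k:ℝ)+1-α) * ((e:ℝ)+θ) * ((k:ℝ)+(e:ℝ)+2+θ)) * hrel


lemma claimB (α θ : ℝ) (hθ : 0 < θ) {N : ℕ} (hN : 2 ≤ N) :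
    α = ((N:ℝ) - 1 + θ) * decrementMatrix α θ N 1
        - ((N:ℝ) - 2 + θ) * decrementMatrix α θ (N-1) 1 := by
  obtain ⟨e, rfl⟩ : ∃ e, N = e + 2 := ⟨N - 2, by omega⟩
  rw [show (e+2) - 1 = e + 1 from rfl,
    dM_of_le α θ (n := e+2) (m := 1) (by omega) (by omega),
    dM_of_le α θ (n := e+1) (m := 1) (by omega) (by omega)]
  simp only [Nat.choose_one_right, show (1:ℕ) - 1 = 0 from rfl, risingFactorial]
  have h1 : ((e:ℝ) + 2) ≠ 0 := by positivity
  have h2 : ((e:ℝ) + 1) ≠ 0 := by positivity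
  push_cast
  have h3 : (1:ℝ) + e + θ ≠ 0 := by positivity
  have h4 : (e:ℝ) + θ ≠ 0 := by positivity
  ring_nf
  field_simp
  ring

noncomputable def Pfun (α θ : ℝ) (c : List ℕ) : ℝ :=
  ∏ j ∈ Finset.range c.length, decrementMatrix α θ ((c.drop j).sum) (c.getD j 0)

noncomputable def P'fun (α θ : ℝ) (c : List ℕ) : ℝ :=
  ∏ j ∈ Finset.range c.length, decrementMatrix α θ ((c.drop j).sum - 1) (c.getD j 0)

@[simp] lemma Pfun_nil (α θ : ℝ) : Pfun α θ [] = 1 := by simp [Pfun]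

@[simp] lemma P'fun_nil (α θ : ℝ) : P'fun α θ [] = 1 := by simp [P'fun]

lemma Pfun_cons (α θ : ℝ) (a : ℕ) (t : List ℕ) :
    Pfun α θ (a :: t) = decrementMatrix α θ (a + t.sum) a * Pfun α θ t := by
  rw [Pfun, List.length_cons, Finset.prod_range_succ']
  simp only [List.drop_succ_cons, List.getD_cons_succ, List.drop_zero, List.getD_cons_zero,
    List.sum_cons]
  rw [mul_comm]; rfl

lemma P'fun_cons (α θ : ℝ) (a : ℕ) (t : List ℕ) :
    P'fun α θ (a :: t) = decrementMatrix α θ (a + t.sum - 1) a * P'fun α θ t := by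
  rw [P'fun, List.length_cons, Finset.prod_range_succ']
  simp only [List.drop_succ_cons, List.getD_cons_succ, List.drop_zero, List.getD_cons_zero,
    List.sum_cons]
  rw [mul_comm]; rfl

lemma P'fun_eq_zero (α θ : ℝ) : ∀ (c : List ℕ), c ≠ [] → (∀ x ∈ c, 0 < x) →
    P'fun α θ c = 0 := by
  intro c
  induction c with
  | nil => intro h; exact absurd rfl h
  | cons a t ih =>
    intro _ hpos
    rw [P'fun_cons]
    rcases eq_or_ne t [] with rfl | ht
    · have ha : 1 ≤ a := hpos a (by simp)
      simp only [List.sum_nil, Nat.add_zero]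
      rw [dM_eq_zero_of_lt α θ (by omega), zero_mul]
    · rw [ih ht (fun x hx => hpos x (by simp [hx])), mul_zero]

lemma sum_set_add (t : List ℕ) (j v : ℕ) (hj : j < t.length) :
    (t.set j v).sum + t.getD j 0 = t.sum + v := by
  rw [List.sum_set, if_pos hj, List.getD_eq_getElem _ _ hj]
  conv_rhs => rw [← List.take_append_drop j t]
  rw [List.sum_append, List.drop_eq_getElem_cons hj, List.sum_cons]
  ring

lemma sum_eraseIdx_add (t : List ℕ) (j : ℕ) (hj : j < t.length) :
    (t.eraseIdx j).sum + t.getD j 0 = t.sum := by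
  rw [List.eraseIdx_eq_take_drop_succ, List.sum_append, List.getD_eq_getElem _ _ hj]
  conv_rhs => rw [← List.take_append_drop j t]
  rw [List.sum_append, List.drop_eq_getElem_cons hj, List.sum_cons]
  ring

lemma keySum (α θ : ℝ) (hα0 : 0 < α) (hα1 : α < 1) (hθ : 0 < θ) :
    ∀ c : List ℕ, (∀ x ∈ c, 0 < x) →
    (∑ j ∈ Finset.range c.length,
      ((if 2 ≤ c.getD j 0 then
          Pfun α θ (c.set j (c.getD j 0 - 1)) * ((c.getD j 0 : ℝ) - 1 - α) else 0)
      + (if c.getD j 0 = 1 ∧ j + 1 < c.length then Pfun α θ (c.eraseIdx j) * α else 0)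
      + (if c.getD j 0 = 1 ∧ j + 1 = c.length then Pfun α θ (c.eraseIdx j) * θ else 0)))
    = ((c.sum : ℝ) - 1 + θ) * Pfun α θ c - (θ - 1) * P'fun α θ c := by
  intro c
  induction c with
  | nil => simp; ring
  | cons a t ih =>
    intro hpos
    have ha : 1 ≤ a := hpos a (by simp)
    have htpos : ∀ x ∈ t, 0 < x := fun x hx => hpos x (by simp [hx])
    rw [List.length_cons, Finset.sum_range_succ']
    have key : ∀ j ∈ Finset.range t.length,
        ((if 2 ≤ (a::t).getD (j+1) 0 then
            Pfun α θ ((a::t).set (j+1) ((a::t).getD (j+1) 0 - 1)) * (((a::t).getD (j+1) 0 : ℝ) - 1 - α) else 0)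
        + (if (a::t).getD (j+1) 0 = 1 ∧ (j+1) + 1 < t.length + 1 then Pfun α θ ((a::t).eraseIdx (j+1)) * α else 0)
        + (if (a::t).getD (j+1) 0 = 1 ∧ (j+1) + 1 = t.length + 1 then Pfun α θ ((a::t).eraseIdx (j+1)) * θ else 0))
        = decrementMatrix α θ (a + t.sum - 1) a *
          ((if 2 ≤ t.getD j 0 then
              Pfun α θ (t.set j (t.getD j 0 - 1)) * ((t.getD j 0 : ℝ) - 1 - α) else 0)
          + (if t.getD j 0 = 1 ∧ j + 1 < t.length then Pfun α θ (t.eraseIdx j) * α else 0)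
          + (if t.getD j 0 = 1 ∧ j + 1 = t.length then Pfun α θ (t.eraseIdx j) * θ else 0)) := by
      intro j hj
      rw [Finset.mem_range] at hj
      simp only [List.getD_cons_succ, List.set_cons_succ, List.eraseIdx_cons_succ,
        List.length_cons, Nat.add_lt_add_iff_right, Nat.add_right_cancel_iff]
      rw [mul_add, mul_add]
      congr 1
      · congr 1
        · split_ifs with h
          · have hs := sum_set_add t j (t.getD j 0 - 1) hj
            rw [Pfun_cons, show a + (t.set j (t.getD j 0 - 1)).sum = a + t.sum - 1 from by omega]
            ring
          · rw [mul_zero]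
        · split_ifs with h
          · have hs := sum_eraseIdx_add t j hj
            rw [Pfun_cons, show a + (t.eraseIdx j).sum = a + t.sum - 1 from by omega]
            ring
          · rw [mul_zero]
      · split_ifs with h
        · have hs := sum_eraseIdx_add t j hj
          rw [Pfun_cons, show a + (t.eraseIdx j).sum = a + t.sum - 1 from by omega]
          ring
        · rw [mul_zero]
    rw [Finset.sum_congr rfl key, ← Finset.mul_sum, ih htpos]
    -- now the head term
    simp only [List.getD_cons_zero, List.set_cons_zero, List.eraseIdx_cons_zero,
      List.length_cons, List.sum_cons, Pfun_cons, P'fun_cons]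
    rcases eq_or_ne t [] with rfl | ht
    · -- t = []
      have ha1 : a = 1 ∨ 2 ≤ a := by omega
      simp only [List.length_nil, List.sum_nil, Nat.add_zero]
      rcases ha1 with rfl | ha2
      · norm_num
        rw [dM_one_one α θ hθ, dM_eq_zero_of_lt α θ (show 1-1 < 1 by omega)]
        norm_num
      · rw [if_pos ha2, if_neg (by omega), if_neg (by omega)]
        have hA := claimA α θ hα0 hα1 hθ (m := a) (N := a) ha2 le_rfl
        have h0 : decrementMatrix α θ (a-1) a = 0 := dM_eq_zero_of_lt α θ (by omega)
        rw [h0] at hA ⊢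
        simp only [Pfun_nil, P'fun_nil, Nat.cast_zero]
        linear_combination hA
    · -- t ≠ []
      have htsum : 1 ≤ t.sum := by
        rcases t with _ | ⟨b, t'⟩
        · exact absurd rfl ht
        · have := htpos b (by simp); simp [List.sum_cons]; omega
      have hlen : 0 < t.length := List.length_pos_iff.2 ht
      rcases (by omega : a = 1 ∨ 2 ≤ a) with rfl | ha2
      · rw [if_neg (by omega), if_pos ⟨rfl, by omega⟩, if_neg (by omega)]
        have hB := claimB α θ hθ (N := 1 + t.sum) (by omega)
        push_cast at hB ⊢
        linear_combination Pfun α θ t * hB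
      · rw [if_pos ha2, if_neg (by omega), if_neg (by omega)]
        have hA := claimA α θ hα0 hα1 hθ (m := a) (N := a + t.sum) ha2 (by omega)
        rw [show a - 1 + t.sum = a + t.sum - 1 from by omega]
        push_cast at hA ⊢
        linear_combination Pfun α θ t * hA

/-- The law of the composition `C_n` of table sizes in the ordered Chinese Restaurant
Process with parameters `(α, θ)`: `C_0` is the empty composition; given `C_n`, the next
composition `C_{n+1}` is obtained by increasing part `j` by one with probability
`(n_j − α)/(n + θ)`, inserting a new part `1` immediately to the left of part `j` with
probability `α/(n + θ)`, and appending a new part `1` at the right end with probability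
`θ/(n + θ)`.  (In particular `C_1 = (1)` almost surely.)  The recursion below computes
the resulting probability mass function by enumerating, for a composition `c` of `n+1`,
the part `j` of `c` affected by the last step. -/
noncomputable def ocrpCompLaw (α θ : ℝ) : ℕ → List ℕ → ℝ
  | 0, c => if c = [] then 1 else 0
  | n + 1, c =>
      ∑ j ∈ Finset.range c.length,
        ((if 2 ≤ c.getD j 0 then
            ocrpCompLaw α θ n (c.set j (c.getD j 0 - 1)) *
              (((c.getD j 0 : ℝ) - 1 - α) / ((n : ℝ) + θ))
          else 0)
        + (if c.getD j 0 = 1 ∧ j + 1 < c.length then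
            ocrpCompLaw α θ n (c.eraseIdx j) * (α / ((n : ℝ) + θ))
          else 0)
        + (if c.getD j 0 = 1 ∧ j + 1 = c.length then
            ocrpCompLaw α θ n (c.eraseIdx j) * (θ / ((n : ℝ) + θ))
          else 0))

lemma master (α θ : ℝ) (hα0 : 0 < α) (hα1 : α < 1) (hθ : 0 < θ) :
    ∀ (n : ℕ) (c : List ℕ), (∀ x ∈ c, 0 < x) → c.sum = n →
      ocrpCompLaw α θ n c = Pfun α θ c := by
  intro n
  induction n with
  | zero =>
    intro c hpos hsum
    rcases c with _ | ⟨a, t⟩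
    · simp [ocrpCompLaw]
    · exfalso
      have := hpos a (by simp)
      simp [List.sum_cons] at hsum
      omega
  | succ n ih =>
    intro c hpos hsum
    have hne : c ≠ [] := by
      intro h; subst h; simp at hsum
    have hnθ : ((n:ℝ) + θ) ≠ 0 := by positivity
    have step : ocrpCompLaw α θ (n+1) c =
        (∑ j ∈ Finset.range c.length,
          ((if 2 ≤ c.getD j 0 then
              Pfun α θ (c.set j (c.getD j 0 - 1)) * ((c.getD j 0 : ℝ) - 1 - α) else 0)
          + (if c.getD j 0 = 1 ∧ j + 1 < c.length then Pfun α θ (c.eraseIdx j) * α else 0)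
          + (if c.getD j 0 = 1 ∧ j + 1 = c.length then Pfun α θ (c.eraseIdx j) * θ else 0)))
          / ((n:ℝ) + θ) := by
      rw [ocrpCompLaw, Finset.sum_div]
      refine Finset.sum_congr rfl fun j hj => ?_
      rw [Finset.mem_range] at hj
      rw [add_div, add_div]
      congr 1
      · congr 1
        · split_ifs with h
          · have hs := sum_set_add c j (c.getD j 0 - 1) hj
            rw [ih (c.set j (c.getD j 0 - 1))
              (fun x hx => by
                rcases List.mem_or_eq_of_mem_set hx with h' | rfl
                · exact hpos x h'
                · omega)
              (by omega)]
            ring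
          · rw [zero_div]
        · split_ifs with h
          · have hs := sum_eraseIdx_add c j hj
            rw [ih (c.eraseIdx j) (fun x hx => hpos x (List.mem_of_mem_eraseIdx hx))
              (by omega)]
            ring
          · rw [zero_div]
      · split_ifs with h
        · have hs := sum_eraseIdx_add c j hj
          rw [ih (c.eraseIdx j) (fun x hx => hpos x (List.mem_of_mem_eraseIdx hx))
            (by omega)]
          ring
        · rw [zero_div]
    rw [step, keySum α θ hα0 hα1 hθ c hpos, P'fun_eq_zero α θ c hne hpos, hsum]
    push_cast
    field_simp
    ring

/-- the product formula
`P(C_n = (n₁,…,n_k)) = ∏_j q_{α,θ}(N_j, n_j)`, with `N_j = n_j + ⋯ + n_k`; in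
particular, the chain is regenerative:
`P(C_n = n₁ :: rest) = q_{α,θ}(n, n₁) · P(C_{n−n₁} = rest)`. -/
theorem ocrpCompLaw_eq_prod_decrementMatrix (α θ : ℝ) (hα0 : 0 < α) (hα1 : α < 1)
    (hθ : 0 < θ) (n : ℕ) (hn : 1 ≤ n) (c : List ℕ)
    (hpos : ∀ x ∈ c, 0 < x) (hsum : c.sum = n) :
    ocrpCompLaw α θ n c
        = ∏ j ∈ Finset.range c.length, decrementMatrix α θ ((c.drop j).sum) (c.getD j 0)
      ∧ ∀ (n₁ : ℕ) (rest : List ℕ), c = n₁ :: rest →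
        ocrpCompLaw α θ n c = decrementMatrix α θ n n₁ * ocrpCompLaw α θ (n - n₁) rest := by
  have h1 : ocrpCompLaw α θ n c = Pfun α θ c := master α θ hα0 hα1 hθ n c hpos hsum
  constructor
  · exact h1
  · rintro n₁ rest rfl
    have hrpos : ∀ x ∈ rest, 0 < x := fun x hx => hpos x (by simp [hx])
    have hsum' : rest.sum = n - n₁ := by
      simp [List.sum_cons] at hsum; omega
    have h2 : ocrpCompLaw α θ (n - n₁) rest = Pfun α θ rest :=
      master α θ hα0 hα1 hθ (n - n₁) rest hrpos hsum'
    rw [h1, h2, Pfun_cons, show n₁ + rest.sum = n from by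
      simp [List.sum_cons] at hsum; omega]
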